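/- Assume p·q = 0 and q ≠ 0. Then the relative BRST cohomology vanishes at every ghost number other than one: H^g(R(p,q)) = 0 for all integers g ≠ 1. In other words, for non-vanishing momentum the relative cohomology in the (−1,0) picture resides at ghost number one only. -/

import Mathlib

/-!
Massless relative BRST complex of the N=2 string in the (−1,0) picture.

Basis: for each N ≥ 0, `A N 0`, `A N 1` in degree 2N+1 and `B N`, `C N` in
degree 2N+2.  Momenta `p q : Fin 2 → ℂ` correspond to (p⁰,p¹) and (q₀,q₁).
The BRST differential acts by
  Q A_N^0 = 2p⁰ B_N − q₁ C_N,
  Q A_N^1 = 2p¹ B_N + q₀ C_N,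
  Q B_N   = q₀ A_{N+1}^0 + q₁ A_{N+1}^1,
  Q C_N   = 2p⁰ A_{N+1}^1 − 2p¹ A_{N+1}^0.
-/

/-- Basis of the relative complex `R(p,q)`. -/
inductive RB where
  | A : ℕ → Fin 2 → RB
  | B : ℕ → RB
  | C : ℕ → RB

/-- The underlying vector space of the complex `R(p,q)`: formal ℂ-linear
combinations of basis vectors. -/
abbrev RSpace : Type := RB →₀ ℂ

/-- The ghost-number degree of a basis vector. -/
def RB.deg : RB → ℤ
  | .A N _ => 2 * (N : ℤ) + 1
  | .B N => 2 * (N : ℤ) + 2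
  | .C N => 2 * (N : ℤ) + 2

/-- The degree-`g` graded piece `R^g` (the span of the basis vectors of
degree `g`); it is `0` for `g ≤ 0`. -/
noncomputable def Rdeg (g : ℤ) : Submodule ℂ RSpace :=
  Finsupp.supported ℂ ℂ {b : RB | RB.deg b = g}

open Finsupp in
/-- The BRST differential `Q` of `R(p,q)`. -/
noncomputable def Qmap (p q : Fin 2 → ℂ) : RSpace →ₗ[ℂ] RSpace :=
  Finsupp.lift RSpace ℂ RB fun b => match b with
    | .A N μ =>
        (2 * p μ) • single (RB.B N) (1 : ℂ)
          + (if μ = 0 then -(q 1) else q 0) • single (RB.C N) (1 : ℂ)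
    | .B N =>
        q 0 • single (RB.A (N + 1) 0) (1 : ℂ)
          + q 1 • single (RB.A (N + 1) 1) (1 : ℂ)
    | .C N =>
        (2 * p 0) • single (RB.A (N + 1) 1) (1 : ℂ)
          - (2 * p 1) • single (RB.A (N + 1) 0) (1 : ℂ)

/-- The state `q·A_N = q₀ A_N^0 + q₁ A_N^1`. -/
noncomputable def qA (q : Fin 2 → ℂ) (N : ℕ) : RSpace :=
  q 0 • Finsupp.single (RB.A N 0) (1 : ℂ) + q 1 • Finsupp.single (RB.A N 1) (1 : ℂ)

/-- Degree-`g` cocycles: `ker Q ∩ R^g`. -/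
noncomputable def Zg (p q : Fin 2 → ℂ) (g : ℤ) : Submodule ℂ RSpace :=
  Rdeg g ⊓ LinearMap.ker (Qmap p q)

/-- Degree-`g` coboundaries: `Q(R^{g-1})`. -/
noncomputable def Bg (p q : Fin 2 → ℂ) (g : ℤ) : Submodule ℂ RSpace :=
  (Rdeg (g - 1)).map (Qmap p q)

/-- The relative BRST cohomology `H^g(R(p,q)) = (ker Q ∩ R^g)/Q(R^{g-1})`,
realised as the image of the cocycles `Z^g` in the quotient of the whole space
by the coboundaries `B^g = Q(R^{g-1})`. -/
noncomputable def Hco (p q : Fin 2 → ℂ) (g : ℤ) :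
    Submodule ℂ (RSpace ⧸ Bg p q g) :=
  (Zg p q g).map (Bg p q g).mkQ
/-- Assume `p·q = 0` and `q ≠ 0`.  Then the relative BRST
cohomology vanishes at every ghost number other than one: `H^g(R(p,q)) = 0`
for all integers `g ≠ 1`.  In other words, for non-vanishing momentum the
relative cohomology in the (−1,0) picture resides at ghost number one only. -/
lemma RB.deg_pos (b : RB) : 1 ≤ b.deg := by
  cases b <;> simp only [RB.deg] <;> omega

lemma deg_even_eq {N : ℕ} {b : RB} (hb : RB.deg b = 2*(N:ℤ)+2) :
    b = RB.B N ∨ b = RB.C N := by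
  cases b with
  | A M μ => simp only [RB.deg] at hb; omega
  | B M => left; simp only [RB.deg] at hb; congr 1; omega
  | C M => right; simp only [RB.deg] at hb; congr 1; omega

lemma deg_odd_eq {N : ℕ} {b : RB} (hb : RB.deg b = 2*(N:ℤ)+3) :
    b = RB.A (N+1) 0 ∨ b = RB.A (N+1) 1 := by
  cases b with
  | A M μ =>
      simp only [RB.deg] at hb
      have hM : M = N + 1 := by omega
      subst hM
      fin_cases μ
      · exact Or.inl rfl
      · exact Or.inr rfl
  | B M => simp only [RB.deg] at hb; omega
  | C M => simp only [RB.deg] at hb; omega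

lemma two_point (x : RSpace) {b₁ b₂ : RB} (hb : b₁ ≠ b₂)
    (hs : ∀ b, x b ≠ 0 → b = b₁ ∨ b = b₂) :
    x = x b₁ • Finsupp.single b₁ 1 + x b₂ • Finsupp.single b₂ 1 := by
  ext b
  rcases eq_or_ne b b₁ with rfl | h1
  · simp [Finsupp.single_eq_of_ne' (Ne.symm hb)]
  · rcases eq_or_ne b b₂ with rfl | h2
    · simp [Finsupp.single_eq_of_ne' hb]
    · have hx : x b = 0 := by
        by_contra hxb
        rcases hs b hxb with rfl | rfl
        · exact h1 rfl
        · exact h2 rfl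
      simp [hx, Finsupp.single_eq_of_ne' (Ne.symm h1),
        Finsupp.single_eq_of_ne' (Ne.symm h2)]

lemma Q_A0 (p q : Fin 2 → ℂ) (N : ℕ) :
    Qmap p q (Finsupp.single (RB.A N 0) 1) =
      (2 * p 0) • Finsupp.single (RB.B N) (1:ℂ)
        + (-(q 1)) • Finsupp.single (RB.C N) (1:ℂ) := by
  simp [Qmap, Finsupp.lift_apply, Finsupp.sum_single_index]

lemma Q_A1 (p q : Fin 2 → ℂ) (N : ℕ) :
    Qmap p q (Finsupp.single (RB.A N 1) 1) =
      (2 * p 1) • Finsupp.single (RB.B N) (1:ℂ)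
        + (q 0) • Finsupp.single (RB.C N) (1:ℂ) := by
  simp [Qmap, Finsupp.lift_apply, Finsupp.sum_single_index]

lemma Q_B (p q : Fin 2 → ℂ) (N : ℕ) :
    Qmap p q (Finsupp.single (RB.B N) 1) =
      q 0 • Finsupp.single (RB.A (N+1) 0) (1:ℂ)
        + q 1 • Finsupp.single (RB.A (N+1) 1) (1:ℂ) := by
  simp [Qmap, Finsupp.lift_apply, Finsupp.sum_single_index]

lemma Q_C (p q : Fin 2 → ℂ) (N : ℕ) :
    Qmap p q (Finsupp.single (RB.C N) 1) =
      (2 * p 0) • Finsupp.single (RB.A (N+1) 1) (1:ℂ)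
        - (2 * p 1) • Finsupp.single (RB.A (N+1) 0) (1:ℂ) := by
  simp [Qmap, Finsupp.lift_apply, Finsupp.sum_single_index]

lemma ne_A01 (N : ℕ) : RB.A N 0 ≠ RB.A N 1 := by
  simp [Fin.ext_iff]

lemma even_case (p q : Fin 2 → ℂ) (hq : q 0 ≠ 0 ∨ q 1 ≠ 0) (N : ℕ) (x : RSpace)
    (hxd : x ∈ Rdeg (2*(N:ℤ)+2)) (hxk : Qmap p q x = 0) :
    x ∈ Bg p q (2*(N:ℤ)+2) := by
  have hsub := (Finsupp.mem_supported ℂ x).mp hxd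
  have hs : ∀ b, x b ≠ 0 → b = RB.B N ∨ b = RB.C N := fun b hb =>
    deg_even_eq (hsub (Finsupp.mem_support_iff.mpr hb))
  set a := x (RB.B N) with ha
  set c := x (RB.C N) with hc
  have hx : x = a • Finsupp.single (RB.B N) 1 + c • Finsupp.single (RB.C N) 1 :=
    two_point x (by simp) hs
  have hQ : (a * q 0 - 2 * (c * p 1)) • Finsupp.single (RB.A (N+1) 0) (1:ℂ)
      + (a * q 1 + 2 * (c * p 0)) • Finsupp.single (RB.A (N+1) 1) (1:ℂ) = 0 := by
    rw [hx, map_add, map_smul, map_smul, Q_B, Q_C] at hxk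
    rw [← hxk]; module
  have e0 : a * q 0 - 2 * (c * p 1) = 0 := by
    have h' := DFunLike.congr_fun hQ (RB.A (N+1) 0)
    simpa [Finsupp.single_eq_of_ne (Ne.symm (ne_A01 (N+1)))] using h'
  have e1 : a * q 1 + 2 * (c * p 0) = 0 := by
    have h' := DFunLike.congr_fun hQ (RB.A (N+1) 1)
    simpa [Finsupp.single_eq_of_ne (ne_A01 (N+1))] using h'
  rcases hq with hq0 | hq1
  · refine Submodule.mem_map.mpr ⟨(c / q 0) • Finsupp.single (RB.A N 1) 1, ?_, ?_⟩
    · apply Submodule.smul_mem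
      apply Finsupp.single_mem_supported
      show RB.deg (RB.A N 1) = 2*(N:ℤ)+2 - 1
      simp only [RB.deg]; ring
    · rw [map_smul, Q_A1, hx, smul_add, smul_smul, smul_smul]
      have h1 : c / q 0 * (2 * p 1) = a := by
        field_simp
        linear_combination -e0
      have h2 : c / q 0 * q 0 = c := div_mul_cancel₀ c hq0
      rw [h1, h2]
  · refine Submodule.mem_map.mpr ⟨(-(c / q 1)) • Finsupp.single (RB.A N 0) 1, ?_, ?_⟩
    · apply Submodule.smul_mem
      apply Finsupp.single_mem_supported
      show RB.deg (RB.A N 0) = 2*(N:ℤ)+2 - 1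
      simp only [RB.deg]; ring
    · rw [map_smul, Q_A0, hx, smul_add, smul_smul, smul_smul]
      have h1 : -(c / q 1) * (2 * p 0) = a := by
        have hA : a * q 1 = -(c * (2 * p 0)) := by linear_combination e1
        calc -(c / q 1) * (2 * p 0) = -(c * (2 * p 0)) / q 1 := by ring
          _ = a * q 1 / q 1 := by rw [hA]
          _ = a := mul_div_cancel_right₀ a hq1
      have h2 : -(c / q 1) * -(q 1) = c := by
        field_simp
      rw [h1, h2]

lemma odd_case (p q : Fin 2 → ℂ) (hq : q 0 ≠ 0 ∨ q 1 ≠ 0) (N : ℕ) (x : RSpace)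
    (hxd : x ∈ Rdeg (2*(N:ℤ)+3)) (hxk : Qmap p q x = 0) :
    x ∈ Bg p q (2*(N:ℤ)+3) := by
  have hsub := (Finsupp.mem_supported ℂ x).mp hxd
  have hs : ∀ b, x b ≠ 0 → b = RB.A (N+1) 0 ∨ b = RB.A (N+1) 1 := fun b hb =>
    deg_odd_eq (hsub (Finsupp.mem_support_iff.mpr hb))
  set α := x (RB.A (N+1) 0) with hα
  set β := x (RB.A (N+1) 1) with hβ
  have hx : x = α • Finsupp.single (RB.A (N+1) 0) 1
      + β • Finsupp.single (RB.A (N+1) 1) 1 :=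
    two_point x (ne_A01 (N+1)) hs
  have hQ : (α * (2 * p 0) + β * (2 * p 1)) • Finsupp.single (RB.B (N+1)) (1:ℂ)
      + (β * q 0 - α * q 1) • Finsupp.single (RB.C (N+1)) (1:ℂ) = 0 := by
    rw [hx, map_add, map_smul, map_smul, Q_A0, Q_A1] at hxk
    rw [← hxk]; module
  have eC : β * q 0 - α * q 1 = 0 := by
    have h' := DFunLike.congr_fun hQ (RB.C (N+1))
    simpa [Finsupp.single_eq_of_ne
      (show RB.B (N+1) ≠ RB.C (N+1) by simp)] using h'
  rcases hq with hq0 | hq1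
  · refine Submodule.mem_map.mpr ⟨(α / q 0) • Finsupp.single (RB.B N) 1, ?_, ?_⟩
    · apply Submodule.smul_mem
      apply Finsupp.single_mem_supported
      show RB.deg (RB.B N) = 2*(N:ℤ)+3 - 1
      simp only [RB.deg]; ring
    · rw [map_smul, Q_B, hx, smul_add, smul_smul, smul_smul]
      have h1 : α / q 0 * q 0 = α := div_mul_cancel₀ α hq0
      have h2 : α / q 0 * q 1 = β := by
        field_simp
        linear_combination -eC
      rw [h1, h2]
  · refine Submodule.mem_map.mpr ⟨(β / q 1) • Finsupp.single (RB.B N) 1, ?_, ?_⟩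
    · apply Submodule.smul_mem
      apply Finsupp.single_mem_supported
      show RB.deg (RB.B N) = 2*(N:ℤ)+3 - 1
      simp only [RB.deg]; ring
    · rw [map_smul, Q_B, hx, smul_add, smul_smul, smul_smul]
      have h1 : β / q 1 * q 0 = α := by
        field_simp
        linear_combination eC
      have h2 : β / q 1 * q 1 = β := div_mul_cancel₀ β hq1
      rw [h1, h2]

theorem relative_cohomology_vanishes (p q : Fin 2 → ℂ)
    (h : p 0 * q 0 + p 1 * q 1 = 0) (hq : q ≠ 0) :
    ∀ g : ℤ, g ≠ 1 → Hco p q g = ⊥ := by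
  intro g hg
  have hq' : q 0 ≠ 0 ∨ q 1 ≠ 0 := by
    by_contra hcon
    push_neg at hcon
    apply hq
    funext i
    fin_cases i
    · exact hcon.1
    · exact hcon.2
  have hZB : Zg p q g ≤ Bg p q g := by
    rintro x hx
    rw [Zg, Submodule.mem_inf] at hx
    obtain ⟨hxd, hxk⟩ := hx
    rw [LinearMap.mem_ker] at hxk
    rcases lt_or_ge g 1 with hlt | hge
    · have hx0 : x = 0 := by
        ext b
        by_contra hb
        have hmem := (Finsupp.mem_supported ℂ x).mp hxd
          (Finsupp.mem_support_iff.mpr hb)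
        have hpos := RB.deg_pos b
        simp only [Set.mem_setOf_eq] at hmem
        omega
      rw [hx0]; exact Submodule.zero_mem _
    · rcases Int.even_or_odd g with ⟨k, hk⟩ | ⟨k, hk⟩
      · obtain ⟨N, hN⟩ : ∃ N : ℕ, g = 2*(N:ℤ)+2 := ⟨(k-1).toNat, by omega⟩
        subst hN
        exact even_case p q hq' N x hxd hxk
      · obtain ⟨N, hN⟩ : ∃ N : ℕ, g = 2*(N:ℤ)+3 := ⟨(k-1).toNat, by omega⟩
        subst hN
        exact odd_case p q hq' N x hxd hxk
  rw [Hco]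
  apply eq_bot_iff.mpr
  rintro y hy
  obtain ⟨x, hx, rfl⟩ := hy
  simp only [Submodule.mem_bot, Submodule.mkQ_apply,
    Submodule.Quotient.mk_eq_zero]
  exact hZB hx
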